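/- In T_∞, with c_i = Ψ_∞(e_i) satisfying [c_i, c_j] = (j-i)c_{i+j} and c_{-1} = ∂, define Ψ_S(x) = 4[c_2,[c_0,x]] + 2[c_2,x] - 3[c_1,[c_1,x]]. If x commutes with ∂ and is homogeneous of degree d, then Ψ_S(x) commutes with ∂; in particular Ψ_S(L) ⊆ L where L = {x : [∂,x] = 0}. (Key identities: [∂,[c_2,x]] = 3[c_1,x] and [∂,[c_1,[c_1,x]]] = (4d+2)[c_1,x].) -/

import Mathlib

noncomputable section

/-- Generators of `T_∞ = A_1 ⊗ U(W_{≥0})`: `t`, `∂`, and `e_i` for `i ≥ 0`. -/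
inductive TIGen : Type
  | t : TIGen
  | d : TIGen
  | E : ℕ → TIGen

/-- Defining relations of `T_∞ = A_1 ⊗ U(W_{≥0})`: `∂t = t∂ + 1`, the `e_i` commute with
`t` and `∂`, and `[e_i, e_j] = (j-i) e_{i+j}`. -/
inductive tiRel (k : Type) [Field k] :
    FreeAlgebra k TIGen → FreeAlgebra k TIGen → Prop
  | dt : tiRel k (FreeAlgebra.ι k TIGen.d * FreeAlgebra.ι k TIGen.t)
      (FreeAlgebra.ι k TIGen.t * FreeAlgebra.ι k TIGen.d + 1)
  | te (i : ℕ) : tiRel k (FreeAlgebra.ι k TIGen.t * FreeAlgebra.ι k (TIGen.E i))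
      (FreeAlgebra.ι k (TIGen.E i) * FreeAlgebra.ι k TIGen.t)
  | de (i : ℕ) : tiRel k (FreeAlgebra.ι k TIGen.d * FreeAlgebra.ι k (TIGen.E i))
      (FreeAlgebra.ι k (TIGen.E i) * FreeAlgebra.ι k TIGen.d)
  | ee (i j : ℕ) : tiRel k (FreeAlgebra.ι k (TIGen.E i) * FreeAlgebra.ι k (TIGen.E j))
      (FreeAlgebra.ι k (TIGen.E j) * FreeAlgebra.ι k (TIGen.E i) +
        ((j : ℤ) - (i : ℤ)) • FreeAlgebra.ι k (TIGen.E (i + j)))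

/-- The algebra `T_∞ = A_1 ⊗ U(W_{≥0})`, presented by generators and relations. -/
abbrev TInf (k : Type) [Field k] := RingQuot (tiRel k)

/-- The element `t ∈ T_∞`. -/
def tI (k : Type) [Field k] : TInf k :=
  RingQuot.mkAlgHom k (tiRel k) (FreeAlgebra.ι k TIGen.t)

/-- The element `∂ ∈ T_∞`. -/
def dI (k : Type) [Field k] : TInf k :=
  RingQuot.mkAlgHom k (tiRel k) (FreeAlgebra.ι k TIGen.d)

/-- The element `e_i ∈ T_∞` for `i ≥ 0`. -/
def eI (k : Type) [Field k] (i : ℕ) : TInf k :=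
  RingQuot.mkAlgHom k (tiRel k) (FreeAlgebra.ι k (TIGen.E i))

/-- The degree of a generator of `T_∞`: `deg t = 1`, `deg ∂ = -1`, `deg e_i = i`. -/
def tiDeg : TIGen → ℤ
  | TIGen.t => 1
  | TIGen.d => -1
  | TIGen.E i => i

/-- The degree-`d` homogeneous component of `T_∞`: the span of products of generators
whose degrees sum to `d`. -/
def degComp (k : Type) [Field k] (d : ℤ) : Submodule k (TInf k) :=
  Submodule.span k
    {x : TInf k | ∃ L : List TIGen, (L.map tiDeg).sum = d ∧
      x = (L.map fun g => RingQuot.mkAlgHom k (tiRel k) (FreeAlgebra.ι k g)).prod}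

/-- `c_j = Ψ_∞(e_j) = t^{j+1}∂ + Σ_i binom(j+1,i+1) t^{j-i} e_i ∈ T_∞`. -/
def cI (k : Type) [Field k] (j : ℤ) : TInf k :=
  tI k ^ (j + 1).toNat * dI k +
    ∑ i ∈ Finset.range (j + 1).toNat,
      (((j + 1).toNat.choose (i + 1) : ℤ)) • (tI k ^ (j - i).toNat * eI k i)

/-- The commutator in `T_∞`. -/
def brI (k : Type) [Field k] (x y : TInf k) : TInf k := x * y - y * x

/-- The step operator `Ψ_S(x) = 4[c_2,[c_0,x]] + 2[c_2,x] - 3[c_1,[c_1,x]]` on `T_∞`,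
built from `c_i = Ψ_∞(e_i)`. -/
def ΨS (k : Type) [Field k] (x : TInf k) : TInf k :=
  (4 : ℤ) • brI k (cI k 2) (brI k (cI k 0) x) + (2 : ℤ) • brI k (cI k 2) x
    - (3 : ℤ) • brI k (cI k 1) (brI k (cI k 1) x)

section Aux

variable (k : Type) [Field k]

lemma rel_dt : dI k * tI k = tI k * dI k + 1 := by
  have h := RingQuot.mkAlgHom_rel k (tiRel.dt (k := k))
  simpa [tI, dI, map_mul, map_add, map_one] using h

lemma rel_te (i : ℕ) : tI k * eI k i = eI k i * tI k := by
  have h := RingQuot.mkAlgHom_rel k (tiRel.te (k := k) i)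
  simpa [tI, eI, map_mul] using h

lemma rel_de (i : ℕ) : dI k * eI k i = eI k i * dI k := by
  have h := RingQuot.mkAlgHom_rel k (tiRel.de (k := k) i)
  simpa [dI, eI, map_mul] using h

lemma rel_ee (i j : ℕ) :
    eI k i * eI k j = eI k j * eI k i + ((j : ℤ) - (i : ℤ)) • eI k (i + j) := by
  have h := RingQuot.mkAlgHom_rel k (tiRel.ee (k := k) i j)
  simpa [eI, map_mul, map_add, map_zsmul] using h

lemma rel_dt' (y : TInf k) : dI k * (tI k * y) = tI k * (dI k * y) + y := by
  rw [← mul_assoc, rel_dt, add_mul, one_mul, mul_assoc]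

lemma rel_te' (i : ℕ) (y : TInf k) : tI k * (eI k i * y) = eI k i * (tI k * y) := by
  rw [← mul_assoc, rel_te, mul_assoc]

lemma rel_de' (i : ℕ) (y : TInf k) : dI k * (eI k i * y) = eI k i * (dI k * y) := by
  rw [← mul_assoc, rel_de, mul_assoc]

lemma d_mul_t_pow (n : ℕ) :
    dI k * tI k ^ (n + 1) = tI k ^ (n + 1) * dI k + ((n : ℤ) + 1) • tI k ^ n := by
  induction n with
  | zero => simpa using rel_dt k
  | succ m ih =>
    rw [pow_succ' (tI k) (m + 1), rel_dt' k, ih, mul_add, ← mul_assoc,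
      mul_smul_comm, ← pow_succ' (tI k) m]
    push_cast
    module

lemma brI_zero_right (a : TInf k) : brI k a 0 = 0 := by simp [brI]

lemma brI_add_right (a x y : TInf k) : brI k a (x + y) = brI k a x + brI k a y := by
  simp [brI, mul_add, add_mul]; abel

lemma brI_sub_right (a x y : TInf k) : brI k a (x - y) = brI k a x - brI k a y := by
  simp [brI, mul_sub, sub_mul]; abel

lemma brI_smul_right (a : TInf k) (z : ℤ) (x : TInf k) :
    brI k a (z • x) = z • brI k a x := by
  rw [brI, brI, mul_smul_comm, smul_mul_assoc]; exact (smul_sub z _ _).symm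

lemma brI_smul_right' (a : TInf k) (z : k) (x : TInf k) :
    brI k a (z • x) = z • brI k a x := by
  rw [brI, brI, smul_sub, mul_smul_comm, smul_mul_assoc]

lemma brI_smul_left (a : TInf k) (z : ℤ) (x : TInf k) :
    brI k (z • a) x = z • brI k a x := by
  rw [brI, brI, smul_mul_assoc, mul_smul_comm]; exact (smul_sub z _ _).symm

lemma brI_mul (a x y : TInf k) :
    brI k a (x * y) = brI k a x * y + x * brI k a y := by
  simp only [brI, sub_mul, mul_sub, mul_assoc]; abel

lemma brI_jacobi (a b x : TInf k) :
    brI k a (brI k b x) = brI k (brI k a b) x + brI k b (brI k a x) := by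
  simp only [brI, sub_mul, mul_sub, mul_assoc]; abel

lemma c0_eq : cI k 0 = tI k * dI k + eI k 0 := by
  simp [cI]

lemma c1_eq : cI k 1 = tI k ^ 2 * dI k + (2 : ℤ) • (tI k ^ 1 * eI k 0)
    + tI k ^ 0 * eI k 1 := by
  have h1 : ((1 : ℤ) + 1).toNat = 2 := rfl
  simp [cI, h1, Finset.sum_range_succ]
  abel

lemma c2_eq : cI k 2 = tI k ^ 3 * dI k + (3 : ℤ) • (tI k ^ 2 * eI k 0)
    + (3 : ℤ) • (tI k ^ 1 * eI k 1) + tI k ^ 0 * eI k 2 := by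
  have h1 : ((2 : ℤ) + 1).toNat = 3 := rfl
  simp [cI, h1, Finset.sum_range_succ]
  abel

lemma br_d_tnd (n : ℕ) :
    brI k (dI k) (tI k ^ (n + 1) * dI k) = ((n : ℤ) + 1) • (tI k ^ n * dI k) := by
  rw [brI, ← mul_assoc, d_mul_t_pow, add_mul, smul_mul_assoc, mul_assoc]
  abel

lemma br_d_tne (n i : ℕ) :
    brI k (dI k) (tI k ^ (n + 1) * eI k i) = ((n : ℤ) + 1) • (tI k ^ n * eI k i) := by
  rw [brI, ← mul_assoc, d_mul_t_pow, add_mul, smul_mul_assoc, mul_assoc,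
    mul_assoc, rel_de, ← mul_assoc]
  abel

lemma br_d_e (i : ℕ) : brI k (dI k) (tI k ^ 0 * eI k i) = 0 := by
  simp [brI, rel_de]

lemma br_d_c1 : brI k (dI k) (cI k 1) = (2 : ℤ) • cI k 0 := by
  rw [c1_eq, c0_eq, brI_add_right, brI_add_right, brI_smul_right,
    br_d_tnd k 1, br_d_tne k 0 0, br_d_e]
  push_cast
  rw [pow_zero, one_mul, pow_one]
  module

lemma br_d_c2 : brI k (dI k) (cI k 2) = (3 : ℤ) • cI k 1 := by
  rw [c2_eq, c1_eq, brI_add_right, brI_add_right, brI_add_right,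
    brI_smul_right, brI_smul_right, br_d_tnd k 2, br_d_tne k 1 0, br_d_tne k 0 1,
    br_d_e]
  push_cast
  module

lemma br_c0_gen (g : TIGen) :
    brI k (cI k 0) (RingQuot.mkAlgHom k (tiRel k) (FreeAlgebra.ι k g)) =
      tiDeg g • RingQuot.mkAlgHom k (tiRel k) (FreeAlgebra.ι k g) := by
  cases g with
  | t =>
    show brI k (cI k 0) (tI k) = tiDeg TIGen.t • tI k
    rw [c0_eq, brI, add_mul, mul_add, mul_assoc, rel_dt, rel_te, mul_add, mul_one,
      ← mul_assoc, tiDeg]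
    abel
  | d =>
    show brI k (cI k 0) (dI k) = tiDeg TIGen.d • dI k
    rw [c0_eq, brI, add_mul, mul_add, ← mul_assoc, rel_dt, rel_de, add_mul, one_mul,
      mul_assoc, tiDeg]
    abel
  | E i =>
    show brI k (cI k 0) (eI k i) = tiDeg (TIGen.E i) • eI k i
    rw [c0_eq, brI, add_mul, mul_add, mul_assoc, rel_de, rel_te', rel_ee k 0 i,
      tiDeg]
    simp only [Nat.cast_zero, sub_zero, Nat.zero_add]
    abel

lemma br_c0_prod (L : List TIGen) :
    brI k (cI k 0)
        ((L.map fun g => RingQuot.mkAlgHom k (tiRel k) (FreeAlgebra.ι k g)).prod) =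
      ((L.map tiDeg).sum) •
        (L.map fun g => RingQuot.mkAlgHom k (tiRel k) (FreeAlgebra.ι k g)).prod := by
  induction L with
  | nil => simp [brI]
  | cons g L ih =>
    simp only [List.map_cons, List.prod_cons, List.sum_cons]
    rw [brI_mul, ih, br_c0_gen, smul_mul_assoc, mul_smul_comm]; exact (add_smul _ _ _).symm

lemma br_c0_of_mem (d : ℤ) (x : TInf k) (hx : x ∈ degComp k d) :
    brI k (cI k 0) x = d • x := by
  refine Submodule.span_induction ?_ ?_ ?_ ?_ hx
  · rintro y ⟨L, hsum, rfl⟩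
    rw [br_c0_prod, hsum]
  · simp [brI]
  · intro y z _ _ hy hz
    rw [brI_add_right, hy, hz]; exact (smul_add _ _ _).symm
  · intro a y _ hy
    rw [brI_smul_right', hy, smul_comm]

lemma c1_mem : cI k 1 ∈ degComp k 1 := by
  rw [c1_eq]
  refine add_mem (add_mem ?_ (zsmul_mem ?_ 2)) ?_
  · refine Submodule.subset_span ⟨[TIGen.t, TIGen.t, TIGen.d], by simp [tiDeg], ?_⟩
    show tI k ^ 2 * dI k = _
    simp [tI, dI, pow_succ, mul_assoc]
  · refine Submodule.subset_span ⟨[TIGen.t, TIGen.E 0], by simp [tiDeg], ?_⟩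
    show tI k ^ 1 * eI k 0 = _
    simp [tI, eI]
  · refine Submodule.subset_span ⟨[TIGen.E 1], by simp [tiDeg], ?_⟩
    show tI k ^ 0 * eI k 1 = _
    simp [eI]

lemma br_c0_c1 : brI k (cI k 0) (cI k 1) = cI k 1 := by
  simpa using br_c0_of_mem k 1 (cI k 1) (c1_mem k)

end Aux

/-- If `x ∈ T_∞` commutes with `∂` and is homogeneous of degree `d`, then the key
identities `[∂,[c_2,x]] = 3[c_1,x]` and `[∂,[c_1,[c_1,x]]] = (4d+2)[c_1,x]` hold, and
`Ψ_S(x)` commutes with `∂`; in particular `Ψ_S` preserves `L = {x : [∂,x] = 0}` on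
homogeneous elements. -/
theorem psiS_preserves_L (k : Type) [Field k] [CharZero k]
    (d : ℤ) (x : TInf k) (hx : x ∈ degComp k d) (hc : dI k * x = x * dI k) :
    brI k (dI k) (brI k (cI k 2) x) = (3 : ℤ) • brI k (cI k 1) x ∧
    brI k (dI k) (brI k (cI k 1) (brI k (cI k 1) x)) = (4 * d + 2) • brI k (cI k 1) x ∧
    dI k * ΨS k x = ΨS k x * dI k := by
  have hbd : brI k (dI k) x = 0 := by rw [brI, hc, sub_self]
  have h0 : brI k (cI k 0) x = d • x := br_c0_of_mem k d x hx
  -- part 1 : [∂,[c₂,x]] = 3[c₁,x]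
  have h1 : brI k (dI k) (brI k (cI k 2) x) = (3 : ℤ) • brI k (cI k 1) x := by
    rw [brI_jacobi, br_d_c2, hbd, brI_zero_right, add_zero, brI_smul_left]
  -- [∂,[c₁,x]] = 2[c₀,x] = (2d)•x
  have h1' : brI k (dI k) (brI k (cI k 1) x) = (2 * d) • x := by
    rw [brI_jacobi, br_d_c1, hbd, brI_zero_right, add_zero, brI_smul_left, h0,
      smul_smul]
  -- [c₀,[c₁,x]] = (d+1)•[c₁,x]
  have h0' : brI k (cI k 0) (brI k (cI k 1) x) = (d + 1) • brI k (cI k 1) x := by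
    rw [brI_jacobi, br_c0_c1, h0, brI_smul_right]; module
  -- part 2
  have h2 : brI k (dI k) (brI k (cI k 1) (brI k (cI k 1) x)) =
      (4 * d + 2) • brI k (cI k 1) x := by
    rw [brI_jacobi, br_d_c1, brI_smul_left, h0', h1', brI_smul_right]
    module
  refine ⟨h1, h2, ?_⟩
  have key : brI k (dI k) (ΨS k x) = 0 := by
    rw [ΨS, brI_sub_right, brI_add_right, brI_smul_right, brI_smul_right,
      brI_smul_right, h0, brI_smul_right, h1, brI_smul_right, h1, h2]
    module
  have := key
  rw [brI] at this
  linear_combination (norm := abel) this
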